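/- If w ∈ A₁^ρ and 1 < p < ∞, then w^{1−p} ∈ A_p^ρ ∩ RH_∞^ρ. In particular, the proof shows that if w ∈ A₁^{ρ,θ} then w^{1−p} ∈ RH_∞^{ρ, θ/(p'−1)}. -/

import Mathlib

open MeasureTheory

noncomputable section

/-- The axis-parallel cube centered at `x` with "radius" `r = √d · ℓ(Q)/2`,
i.e. side length `2r/√d`. -/
def cube (d : ℕ) (x : EuclideanSpace ℝ (Fin d)) (r : ℝ) :
    Set (EuclideanSpace ℝ (Fin d)) :=
  {y | ∀ i, |y i - x i| ≤ r / Real.sqrt d}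

/-- Average `(1/|Q|) ∫_Q w` over the cube `Q(x,r)`. -/
def cubeAvg {d : ℕ} (x : EuclideanSpace ℝ (Fin d)) (r : ℝ)
    (w : EuclideanSpace ℝ (Fin d) → ℝ) : ℝ :=
  (volume (cube d x r)).toReal⁻¹ * ∫ y in cube d x r, w y

/-- Weighted average `(1/u(Q)) ∫_Q v·u` over the cube `Q(x,r)`. -/
def cubeAvgW {d : ℕ} (x : EuclideanSpace ℝ (Fin d)) (r : ℝ)
    (u v : EuclideanSpace ℝ (Fin d) → ℝ) : ℝ :=
  (∫ y in cube d x r, u y)⁻¹ * ∫ y in cube d x r, v y * u y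

/-- Essential infimum of `w` over the cube `Q(x,r)`. -/
def cubeInf {d : ℕ} (x : EuclideanSpace ℝ (Fin d)) (r : ℝ)
    (w : EuclideanSpace ℝ (Fin d) → ℝ) : ℝ :=
  essInf w (volume.restrict (cube d x r))

/-- Essential supremum of `w` over the cube `Q(x,r)`. -/
def cubeSup {d : ℕ} (x : EuclideanSpace ℝ (Fin d)) (r : ℝ)
    (w : EuclideanSpace ℝ (Fin d) → ℝ) : ℝ :=
  essSup w (volume.restrict (cube d x r))

/-- `ρ` is a critical radius function with constants `C₀ > 0` and `N₀ ≥ 1`: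
`C₀⁻¹ ρ(x)(1+|x−y|/ρ(x))^{−N₀} ≤ ρ(y) ≤ C₀ ρ(x)(1+|x−y|/ρ(x))^{N₀/(N₀+1)}`. -/
def IsCRF {d : ℕ} (ρ : EuclideanSpace ℝ (Fin d) → ℝ) (C₀ N₀ : ℝ) : Prop :=
  (∀ x, 0 < ρ x) ∧
    ∀ x y, C₀⁻¹ * ρ x * (1 + dist x y / ρ x) ^ (-N₀) ≤ ρ y ∧
      ρ y ≤ C₀ * ρ x * (1 + dist x y / ρ x) ^ (N₀ / (N₀ + 1))

/-- A weight: a locally integrable function which is positive a.e. -/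
def IsWeight {d : ℕ} (w : EuclideanSpace ℝ (Fin d) → ℝ) : Prop :=
  LocallyIntegrable w volume ∧ ∀ᵐ x ∂(volume : Measure (EuclideanSpace ℝ (Fin d))), 0 < w x

/-- The class `A₁^{ρ,θ}` with explicit constant `C`. -/
def A1C {d : ℕ} (ρ : EuclideanSpace ℝ (Fin d) → ℝ) (θ C : ℝ)
    (w : EuclideanSpace ℝ (Fin d) → ℝ) : Prop :=
  ∀ x r, 0 < r → cubeAvg x r w ≤ C * (1 + r / ρ x) ^ θ * cubeInf x r w

/-- The class `A₁^{ρ,θ}`. -/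
def memA1 {d : ℕ} (ρ : EuclideanSpace ℝ (Fin d) → ℝ) (θ : ℝ)
    (w : EuclideanSpace ℝ (Fin d) → ℝ) : Prop :=
  ∃ C > 0, A1C ρ θ C w

/-- The class `A₁^ρ = ∪_{θ ≥ 0} A₁^{ρ,θ}`. -/
def A1 {d : ℕ} (ρ : EuclideanSpace ℝ (Fin d) → ℝ)
    (w : EuclideanSpace ℝ (Fin d) → ℝ) : Prop :=
  ∃ θ ≥ 0, memA1 ρ θ w

/-- The class `A_p^{ρ,θ}` (for `1 < p < ∞`) with explicit constant `C`;
here `p' = p/(p-1)`. -/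
def ApC {d : ℕ} (ρ : EuclideanSpace ℝ (Fin d) → ℝ) (p θ C : ℝ)
    (w : EuclideanSpace ℝ (Fin d) → ℝ) : Prop :=
  ∀ x r, 0 < r →
    (cubeAvg x r w) ^ (1 / p) *
      (cubeAvg x r fun y => w y ^ (1 - p / (p - 1))) ^ (1 - 1 / p) ≤
        C * (1 + r / ρ x) ^ θ

/-- The class `A_p^{ρ,θ}` for `1 < p < ∞`. -/
def memAp {d : ℕ} (ρ : EuclideanSpace ℝ (Fin d) → ℝ) (p θ : ℝ)
    (w : EuclideanSpace ℝ (Fin d) → ℝ) : Prop :=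
  ∃ C > 0, ApC ρ p θ C w

/-- The class `A_p^ρ = ∪_{θ ≥ 0} A_p^{ρ,θ}` for `1 < p < ∞`. -/
def Ap {d : ℕ} (ρ : EuclideanSpace ℝ (Fin d) → ℝ) (p : ℝ)
    (w : EuclideanSpace ℝ (Fin d) → ℝ) : Prop :=
  ∃ θ ≥ 0, memAp ρ p θ w

/-- The class `A_∞^ρ = ∪_{p > 1} A_p^ρ`. -/
def Ainf {d : ℕ} (ρ : EuclideanSpace ℝ (Fin d) → ℝ)
    (w : EuclideanSpace ℝ (Fin d) → ℝ) : Prop :=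
  ∃ p, 1 < p ∧ Ap ρ p w

/-- The reverse Hölder class `RH_s^{ρ,θ}` with explicit constant `C`. -/
def RHC {d : ℕ} (ρ : EuclideanSpace ℝ (Fin d) → ℝ) (s θ C : ℝ)
    (w : EuclideanSpace ℝ (Fin d) → ℝ) : Prop :=
  ∀ x r, 0 < r →
    (cubeAvg x r fun y => w y ^ s) ^ (1 / s) ≤
      C * (1 + r / ρ x) ^ θ * cubeAvg x r w

/-- The reverse Hölder class `RH_s^{ρ,θ}`. -/
def memRH {d : ℕ} (ρ : EuclideanSpace ℝ (Fin d) → ℝ) (s θ : ℝ)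
    (w : EuclideanSpace ℝ (Fin d) → ℝ) : Prop :=
  ∃ C > 0, RHC ρ s θ C w

/-- The class `RH_s^ρ = ∪_{θ ≥ 0} RH_s^{ρ,θ}`. -/
def RH {d : ℕ} (ρ : EuclideanSpace ℝ (Fin d) → ℝ) (s : ℝ)
    (w : EuclideanSpace ℝ (Fin d) → ℝ) : Prop :=
  ∃ θ ≥ 0, memRH ρ s θ w

/-- The class `RH_∞^{ρ,θ}` with explicit constant `C`. -/
def RHinfC {d : ℕ} (ρ : EuclideanSpace ℝ (Fin d) → ℝ) (θ C : ℝ)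
    (w : EuclideanSpace ℝ (Fin d) → ℝ) : Prop :=
  ∀ x r, 0 < r → cubeSup x r w ≤ C * (1 + r / ρ x) ^ θ * cubeAvg x r w

/-- The class `RH_∞^{ρ,θ}`. -/
def memRHinf {d : ℕ} (ρ : EuclideanSpace ℝ (Fin d) → ℝ) (θ : ℝ)
    (w : EuclideanSpace ℝ (Fin d) → ℝ) : Prop :=
  ∃ C > 0, RHinfC ρ θ C w

/-- The class `RH_∞^ρ = ∪_{θ ≥ 0} RH_∞^{ρ,θ}`. -/
def RHinf {d : ℕ} (ρ : EuclideanSpace ℝ (Fin d) → ℝ)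
    (w : EuclideanSpace ℝ (Fin d) → ℝ) : Prop :=
  ∃ θ ≥ 0, memRHinf ρ θ w

/-- The weighted class `A_p^{ρ,θ}(u)` (for `1 < p < ∞`) with explicit constant `C`. -/
def ApWC {d : ℕ} (ρ u : EuclideanSpace ℝ (Fin d) → ℝ) (p θ C : ℝ)
    (v : EuclideanSpace ℝ (Fin d) → ℝ) : Prop :=
  ∀ x r, 0 < r →
    (cubeAvgW x r u v) ^ (1 / p) *
      (cubeAvgW x r u fun y => v y ^ (1 - p / (p - 1))) ^ (1 - 1 / p) ≤
        C * (1 + r / ρ x) ^ θ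

/-- The weighted class `A_p^{ρ,θ}(u)` for `1 < p < ∞`. -/
def memApW {d : ℕ} (ρ u : EuclideanSpace ℝ (Fin d) → ℝ) (p θ : ℝ)
    (v : EuclideanSpace ℝ (Fin d) → ℝ) : Prop :=
  ∃ C > 0, ApWC ρ u p θ C v

/-- The weighted class `A_p^ρ(u) = ∪_{θ ≥ 0} A_p^{ρ,θ}(u)` for `1 < p < ∞`. -/
def ApW {d : ℕ} (ρ u : EuclideanSpace ℝ (Fin d) → ℝ) (p : ℝ)
    (v : EuclideanSpace ℝ (Fin d) → ℝ) : Prop :=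
  ∃ θ ≥ 0, memApW ρ u p θ v

/-- The weighted class `A₁^{ρ,θ}(u)`. -/
def memA1W {d : ℕ} (ρ u : EuclideanSpace ℝ (Fin d) → ℝ) (θ : ℝ)
    (v : EuclideanSpace ℝ (Fin d) → ℝ) : Prop :=
  ∃ C > 0, ∀ x r, 0 < r → cubeAvgW x r u v ≤ C * (1 + r / ρ x) ^ θ * cubeInf x r v

/-- The weighted class `A₁^ρ(u)`. -/
def A1W {d : ℕ} (ρ u : EuclideanSpace ℝ (Fin d) → ℝ)
    (v : EuclideanSpace ℝ (Fin d) → ℝ) : Prop :=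
  ∃ θ ≥ 0, memA1W ρ u θ v

/-- The weighted class `A_∞^ρ(u) = ∪_{p > 1} A_p^ρ(u)`. -/
def AinfW {d : ℕ} (ρ u : EuclideanSpace ℝ (Fin d) → ℝ)
    (v : EuclideanSpace ℝ (Fin d) → ℝ) : Prop :=
  ∃ p, 1 < p ∧ ApW ρ u p v


section AuxLemmas

open Filter ENNReal NNReal

set_option maxHeartbeats 1000000

variable {d : ℕ}

lemma coord_dist_le (x y : EuclideanSpace ℝ (Fin d)) (i : Fin d) :
    dist (x i) (y i) ≤ dist x y := by
  rw [EuclideanSpace.dist_eq]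
  have h1 : dist (x i) (y i) ^ 2 ≤ ∑ j, dist (x j) (y j) ^ 2 :=
    Finset.single_le_sum (f := fun j => dist (x j) (y j) ^ 2)
      (fun j _ => sq_nonneg _) (Finset.mem_univ i)
  calc dist (x i) (y i) = Real.sqrt (dist (x i) (y i) ^ 2) :=
        (Real.sqrt_sq dist_nonneg).symm
    _ ≤ _ := Real.sqrt_le_sqrt h1

lemma cube_isClosed (x : EuclideanSpace ℝ (Fin d)) (r : ℝ) : IsClosed (cube d x r) := by
  have h : cube d x r
      = ⋂ i, {y : EuclideanSpace ℝ (Fin d) | |y i - x i| ≤ r / Real.sqrt d} := by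
    ext y; simp [cube, Set.mem_iInter]
  rw [h]
  refine isClosed_iInter fun i => isClosed_le ?_ continuous_const
  have hc : Continuous fun y : EuclideanSpace ℝ (Fin d) => y i := by
    refine (LipschitzWith.of_dist_le_mul (K := 1) fun a b => ?_).continuous
    simpa using coord_dist_le a b i
  exact (hc.sub continuous_const).abs

lemma cube_subset_closedBall (x : EuclideanSpace ℝ (Fin d)) {r : ℝ} (hr : 0 ≤ r) :
    cube d x r ⊆ Metric.closedBall x r := by
  intro y hy
  rw [Metric.mem_closedBall, EuclideanSpace.dist_eq]
  have hsum : ∑ i, dist (y i) (x i) ^ 2 ≤ r ^ 2 := by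
    rcases Nat.eq_zero_or_pos d with hd | hd
    · subst hd; simpa using sq_nonneg r
    · have hd0 : (0:ℝ) < (d:ℝ) := by exact_mod_cast hd
      calc ∑ i, dist (y i) (x i) ^ 2 ≤ ∑ _i : Fin d, (r / Real.sqrt d) ^ 2 := by
            refine Finset.sum_le_sum fun i _ => ?_
            have h1 : dist (y i) (x i) ≤ r / Real.sqrt d := by
              rw [Real.dist_eq]; exact hy i
            exact pow_le_pow_left₀ dist_nonneg h1 2
        _ = (d : ℝ) * (r / Real.sqrt d) ^ 2 := by
            rw [Finset.sum_const, Finset.card_univ, Fintype.card_fin, nsmul_eq_mul]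
        _ = r ^ 2 := by
            rw [div_pow, Real.sq_sqrt hd0.le]
            field_simp
  calc Real.sqrt (∑ i, dist (y i) (x i) ^ 2) ≤ Real.sqrt (r ^ 2) := Real.sqrt_le_sqrt hsum
    _ = r := Real.sqrt_sq hr

lemma ball_subset_cube (x : EuclideanSpace ℝ (Fin d)) (r : ℝ) :
    Metric.ball x (r / Real.sqrt (max d 1 : ℕ)) ⊆ cube d x r := by
  intro y hy i
  have hd : (max d 1 : ℕ) = d := max_eq_left i.pos
  rw [Metric.mem_ball, hd] at hy
  have h1 : dist (y i) (x i) ≤ dist y x := coord_dist_le y x i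
  have := lt_of_le_of_lt h1 hy
  rw [Real.dist_eq] at this
  exact this.le

lemma volume_cube_pos (x : EuclideanSpace ℝ (Fin d)) {r : ℝ} (hr : 0 < r) :
    0 < volume (cube d x r) := by
  have h1 : (1:ℝ) ≤ ((max d 1 : ℕ) : ℝ) := by exact_mod_cast le_max_right d 1
  have hrad : 0 < r / Real.sqrt (max d 1 : ℕ) :=
    div_pos hr (Real.sqrt_pos.mpr (by linarith))
  exact lt_of_lt_of_le (Metric.measure_ball_pos volume x hrad)
    (measure_mono (ball_subset_cube x r))

lemma volume_cube_lt_top (x : EuclideanSpace ℝ (Fin d)) {r : ℝ} (hr : 0 ≤ r) :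
    volume (cube d x r) < ⊤ :=
  lt_of_le_of_lt (measure_mono (cube_subset_closedBall x hr)) measure_closedBall_lt_top

lemma key_lemma {d : ℕ} (ρ : EuclideanSpace ℝ (Fin d) → ℝ) (hρ : ∀ x, 0 < ρ x)
    (w : EuclideanSpace ℝ (Fin d) → ℝ) (hw : IsWeight w)
    (p : ℝ) (hp : 1 < p) (θ C : ℝ) (hC : 0 < C) (hA : A1C ρ θ C w) :
    ApC ρ p (θ * (1 - 1/p)) (C ^ (1 - 1/p)) (fun x => w x ^ (1 - p)) ∧
    RHinfC ρ (θ * (p - 1)) (C ^ (p - 1)) (fun x => w x ^ (1 - p)) := by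
  have hp0 : (0:ℝ) < p := lt_trans one_pos hp
  have hp1 : (0:ℝ) < p - 1 := by linarith
  have hop : 0 ≤ 1 - 1/p := by
    have : 1/p < 1 := by rw [div_lt_one hp0]; exact hp
    linarith
  have hpne : p ≠ 0 := hp0.ne'
  have hp1ne : p - 1 ≠ 0 := hp1.ne'
  have main : ∀ x r, 0 < r →
      (cubeAvg x r (fun y => w y ^ (1 - p))) ^ (1/p) *
        (cubeAvg x r fun y => (w y ^ (1 - p)) ^ (1 - p / (p - 1))) ^ (1 - 1/p) ≤
          C ^ (1 - 1/p) * (1 + r / ρ x) ^ (θ * (1 - 1/p)) ∧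
      cubeSup x r (fun y => w y ^ (1 - p)) ≤
        C ^ (p - 1) * (1 + r / ρ x) ^ (θ * (p - 1)) *
          cubeAvg x r (fun y => w y ^ (1 - p)) := by
    intro x r hr
    simp only [cubeAvg, cubeSup]
    set Q := cube d x r with hQdef
    have hQc : IsCompact Q :=
      Metric.isCompact_of_isClosed_isBounded (cube_isClosed x r)
        (Metric.isBounded_closedBall.subset (cube_subset_closedBall x hr.le))
    have hV0 : volume Q ≠ 0 := (volume_cube_pos x hr).ne'
    have hVt : volume Q ≠ ⊤ := (volume_cube_lt_top x hr.le).ne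
    set ν := (volume : Measure (EuclideanSpace ℝ (Fin d))).restrict Q with hνdef
    have hνuniv : ν Set.univ = volume Q := by
      rw [hνdef, Measure.restrict_apply_univ]
    haveI : IsFiniteMeasure ν := ⟨by rw [hνuniv]; exact hVt.lt_top⟩
    set V := (volume Q).toReal with hVdef
    have hV : 0 < V := ENNReal.toReal_pos hV0 hVt
    have hwae : ∀ᵐ y ∂ν, 0 < w y := ae_restrict_of_ae hw.2
    have hwnn : 0 ≤ᵐ[ν] w := hwae.mono fun y hy => hy.le
    have hwint : Integrable w ν := hw.1.integrableOn_isCompact hQc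
    have hbase : 0 < 1 + r / ρ x := by
      have := div_pos hr (hρ x); linarith
    set K := C * (1 + r / ρ x) ^ θ with hKdef
    have hK : 0 < K := mul_pos hC (Real.rpow_pos_of_pos hbase θ)
    set m := cubeInf x r w with hmdef
    set I := ∫ y in Q, w y with hIdef
    have havg : V⁻¹ * I ≤ K * m := hA x r hr
    have hI : 0 < I := by
      rw [hIdef]
      refine (integral_pos_iff_support_of_nonneg_ae hwnn hwint).mpr ?_
      have h1 : ν {y | ¬ 0 < w y} = 0 := hwae
      have h2 : ν (Function.support w)ᶜ = 0 := by
        refine measure_mono_null ?_ h1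
        intro y hy
        simp only [Set.mem_compl_iff, Function.mem_support, not_not] at hy
        simp [hy]
      have h3 : ν Set.univ ≤ ν (Function.support w) + ν (Function.support w)ᶜ :=
        measure_univ_le_add_compl _
      rw [h2, add_zero, hνuniv] at h3
      exact lt_of_lt_of_le (pos_iff_ne_zero.mpr hV0) h3
    have hm : 0 < m := by
      have h0 : 0 < K * m := lt_of_lt_of_le (by positivity) havg
      rcases mul_pos_iff.mp h0 with ⟨_, h⟩ | ⟨h, _⟩
      · exact h
      · exact absurd hK (not_lt.mpr h.le)
    have hwm : ∀ᵐ y ∂ν, m ≤ w y := by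
      have hb : IsBoundedUnder (· ≥ ·) (ae ν) w :=
        ⟨0, eventually_map.mpr hwnn⟩
      exact ae_essInf_le hb
    have hgm : ∀ᵐ y ∂ν, w y ^ (1 - p) ≤ m ^ (1 - p) := by
      filter_upwards [hwm] with y h1
      exact Real.rpow_le_rpow_of_nonpos hm h1 (by linarith)
    have hgnn : ∀ᵐ y ∂ν, 0 ≤ w y ^ (1 - p) := by
      filter_upwards [hwae] with y hy
      exact (Real.rpow_pos_of_pos hy _).le
    have hgmeas : AEStronglyMeasurable (fun y => w y ^ (1 - p)) ν := by
      exact (hw.1.aestronglyMeasurable.restrict.aemeasurable.pow_const (1 - p)).aestronglyMeasurable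
    have hgint : Integrable (fun y => w y ^ (1 - p)) ν := by
      refine Integrable.mono' (integrable_const (m ^ (1 - p))) hgmeas ?_
      filter_upwards [hgm, hgnn] with y h1 h2
      rwa [Real.norm_eq_abs, abs_of_nonneg h2]
    set I' := ∫ y in Q, w y ^ (1 - p) with hI'def
    have hI'nn : 0 ≤ I' := integral_nonneg_of_ae hgnn
    have hI'le : I' ≤ V * m ^ (1 - p) := by
      have h := integral_mono_ae hgint (integrable_const (m ^ (1 - p))) hgm
      rw [integral_const, measureReal_def, hνuniv, smul_eq_mul] at h
      exact h
    -- Hölder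
    have hpq : (p / (p - 1)).HolderConjugate p := (Real.HolderConjugate.conjExponent hp).symm
    have hFmeas : AEMeasurable (fun y => ENNReal.ofReal (w y)) ν :=
      hw.1.aestronglyMeasurable.restrict.aemeasurable.ennreal_ofReal
    have hHolder := ENNReal.lintegral_mul_le_Lp_mul_Lq ν hpq
      (hFmeas.pow_const ((p - 1)/p)) (hFmeas.pow_const ((1 - p)/p))
    have he0 : (p - 1)/p + (1 - p)/p = 0 := by ring
    have he1 : (p - 1)/p * (p / (p - 1)) = 1 := by field_simp
    have he2 : (1 - p)/p * p = 1 - p := div_mul_cancel₀ _ hpne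
    have E1 : (∫⁻ y, ((fun y => ENNReal.ofReal (w y) ^ ((p - 1)/p)) *
        fun y => ENNReal.ofReal (w y) ^ ((1 - p)/p)) y ∂ν) = volume Q := by
      have heq : ((fun y => ENNReal.ofReal (w y) ^ ((p - 1)/p)) *
          fun y => ENNReal.ofReal (w y) ^ ((1 - p)/p)) =ᵐ[ν] fun _ => (1 : ℝ≥0∞) := by
        filter_upwards [hwae] with y hy
        have h0 : ENNReal.ofReal (w y) ≠ 0 := (ENNReal.ofReal_pos.mpr hy).ne'
        have ht : ENNReal.ofReal (w y) ≠ ⊤ := ENNReal.ofReal_ne_top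
        show ENNReal.ofReal (w y) ^ ((p - 1)/p) * ENNReal.ofReal (w y) ^ ((1 - p)/p) = 1
        rw [← ENNReal.rpow_add _ _ h0 ht, he0, ENNReal.rpow_zero]
      rw [lintegral_congr_ae heq, lintegral_one, hνuniv]
    have E2 : (∫⁻ y, (ENNReal.ofReal (w y) ^ ((p - 1)/p)) ^ (p / (p - 1)) ∂ν)
        = ENNReal.ofReal I := by
      have heq : ∀ y, (ENNReal.ofReal (w y) ^ ((p - 1)/p)) ^ (p / (p - 1))
          = ENNReal.ofReal (w y) := by
        intro y
        rw [← ENNReal.rpow_mul, he1, ENNReal.rpow_one]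
      calc (∫⁻ y, (ENNReal.ofReal (w y) ^ ((p - 1)/p)) ^ (p / (p - 1)) ∂ν)
          = ∫⁻ y, ENNReal.ofReal (w y) ∂ν := lintegral_congr heq
        _ = ENNReal.ofReal I :=
            (MeasureTheory.ofReal_integral_eq_lintegral_ofReal hwint hwnn).symm
    have E3 : (∫⁻ y, (ENNReal.ofReal (w y) ^ ((1 - p)/p)) ^ p ∂ν)
        = ENNReal.ofReal I' := by
      have heq : (fun y => (ENNReal.ofReal (w y) ^ ((1 - p)/p)) ^ p)
          =ᵐ[ν] fun y => ENNReal.ofReal (w y ^ (1 - p)) := by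
        filter_upwards [hwae] with y hy
        rw [← ENNReal.rpow_mul, he2, ENNReal.ofReal_rpow_of_pos hy]
      calc (∫⁻ y, (ENNReal.ofReal (w y) ^ ((1 - p)/p)) ^ p ∂ν)
          = ∫⁻ y, ENNReal.ofReal (w y ^ (1 - p)) ∂ν := lintegral_congr_ae heq
        _ = ENNReal.ofReal I' :=
            (MeasureTheory.ofReal_integral_eq_lintegral_ofReal hgint hgnn).symm
    rw [E1, E2, E3, one_div_div] at hHolder
    have hRHSne : (ENNReal.ofReal I) ^ ((p - 1)/p) * (ENNReal.ofReal I') ^ (1/p) ≠ ⊤ :=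
      ENNReal.mul_ne_top
        (ENNReal.rpow_ne_top_of_nonneg (by positivity) ENNReal.ofReal_ne_top)
        (ENNReal.rpow_ne_top_of_nonneg (by positivity) ENNReal.ofReal_ne_top)
    have hVle : V ≤ I ^ ((p - 1)/p) * I' ^ (1/p) := by
      have h := ENNReal.toReal_mono hRHSne hHolder
      rwa [ENNReal.toReal_mul, ← ENNReal.toReal_rpow, ← ENNReal.toReal_rpow,
        ENNReal.toReal_ofReal hI.le, ENNReal.toReal_ofReal hI'nn] at h
    have hVp : V ^ p ≤ I ^ (p - 1) * I' := by
      calc V ^ p ≤ (I ^ ((p - 1)/p) * I' ^ (1/p)) ^ p :=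
            Real.rpow_le_rpow hV.le hVle hp0.le
        _ = I ^ (p - 1) * I' := by
            rw [Real.mul_rpow (Real.rpow_nonneg hI.le _) (Real.rpow_nonneg hI'nn _),
              ← Real.rpow_mul hI.le, ← Real.rpow_mul hI'nn,
              div_mul_cancel₀ _ hp0.ne', one_div, inv_mul_cancel₀ hp0.ne',
              Real.rpow_one]
    have hIle : I ≤ V * (K * m) := by
      calc I = V * (V⁻¹ * I) := by field_simp
        _ ≤ V * (K * m) := mul_le_mul_of_nonneg_left havg hV.le
    have hV4 : V ≤ K ^ (p - 1) * m ^ (p - 1) * I' := by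
      have hIp : I ^ (p - 1) ≤ (V * (K * m)) ^ (p - 1) :=
        Real.rpow_le_rpow hI.le hIle hp1.le
      have h3 : V ^ p ≤ (V * (K * m)) ^ (p - 1) * I' :=
        le_trans hVp (mul_le_mul_of_nonneg_right hIp hI'nn)
      have hexp : (V * (K * m)) ^ (p - 1)
          = V ^ (p - 1) * (K ^ (p - 1) * m ^ (p - 1)) := by
        rw [Real.mul_rpow hV.le (mul_nonneg hK.le hm.le), Real.mul_rpow hK.le hm.le]
      have hVp' : V ^ p = V ^ (p - 1) * V := by
        rw [← Real.rpow_add_one hV.ne' (p - 1), sub_add_cancel]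
      rw [hVp', hexp] at h3
      have h4 : V ^ (p - 1) * V ≤ V ^ (p - 1) * (K ^ (p - 1) * m ^ (p - 1) * I') := by
        calc V ^ (p - 1) * V ≤ V ^ (p - 1) * (K ^ (p - 1) * m ^ (p - 1)) * I' := h3
          _ = V ^ (p - 1) * (K ^ (p - 1) * m ^ (p - 1) * I') := by ring
      exact le_of_mul_le_mul_left h4 (Real.rpow_pos_of_pos hV _)
    have hmp : (0:ℝ) < m ^ (p - 1) := Real.rpow_pos_of_pos hm _
    have hKp : (0:ℝ) < K ^ (p - 1) := Real.rpow_pos_of_pos hK _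
    have hm1p : m ^ (1 - p) = (m ^ (p - 1))⁻¹ := by
      rw [show (1 - p) = -(p - 1) by ring, Real.rpow_neg hm.le]
    have hRHfin : m ^ (1 - p) ≤ K ^ (p - 1) * (V⁻¹ * I') := by
      rw [hm1p]
      calc (m ^ (p - 1))⁻¹ = (m ^ (p - 1))⁻¹ * V⁻¹ * V := by field_simp
        _ ≤ (m ^ (p - 1))⁻¹ * V⁻¹ * (K ^ (p - 1) * m ^ (p - 1) * I') := by
            refine mul_le_mul_of_nonneg_left hV4 ?_
            positivity
        _ = K ^ (p - 1) * (V⁻¹ * I') := by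
            field_simp
    have hsup : essSup (fun y => w y ^ (1 - p)) ν ≤ m ^ (1 - p) := by
      haveI : (ae ν).NeBot := ae_neBot.mpr
        (fun h => hV0 (by rw [← hνuniv, h]; simp))
      have hcb : IsCoboundedUnder (· ≤ ·) (ae ν) (fun y => w y ^ (1 - p)) :=
        isCoboundedUnder_le_of_eventually_le (ae ν) hgnn
      exact limsup_le_of_le hcb hgm
    have hKfact : ∀ s : ℝ, K ^ s = C ^ s * (1 + r / ρ x) ^ (θ * s) := by
      intro s
      rw [hKdef, Real.mul_rpow hC.le (Real.rpow_nonneg hbase.le _),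
        ← Real.rpow_mul hbase.le]
    constructor
    · -- Ap part
      have he3 : (1 - p) * (1 - p / (p - 1)) = 1 := by
        field_simp
        ring
      have h_inner : (∫ y in Q, (w y ^ (1 - p)) ^ (1 - p / (p - 1))) = I := by
        rw [hIdef]
        refine integral_congr_ae ?_
        filter_upwards [hwae] with y hy
        rw [← Real.rpow_mul hy.le, he3, Real.rpow_one]
      rw [h_inner]
      have hA1 : V⁻¹ * I' ≤ m ^ (1 - p) := by
        calc V⁻¹ * I' ≤ V⁻¹ * (V * m ^ (1 - p)) :=
              mul_le_mul_of_nonneg_left hI'le (by positivity)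
          _ = m ^ (1 - p) := by field_simp
      have hA1nn : 0 ≤ V⁻¹ * I' := mul_nonneg (by positivity) hI'nn
      have havgnn : 0 ≤ V⁻¹ * I := mul_nonneg (by positivity) hI.le
      have hm1pnn : 0 ≤ m ^ (1 - p) := Real.rpow_nonneg hm.le _
      calc (V⁻¹ * I') ^ (1/p) * (V⁻¹ * I) ^ (1 - 1/p)
          ≤ (m ^ (1 - p)) ^ (1/p) * (K * m) ^ (1 - 1/p) := by
            refine mul_le_mul (Real.rpow_le_rpow hA1nn hA1 (by positivity))
              (Real.rpow_le_rpow havgnn havg hop)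
              (Real.rpow_nonneg havgnn _) (Real.rpow_nonneg hm1pnn _)
        _ = C ^ (1 - 1/p) * (1 + r / ρ x) ^ (θ * (1 - 1/p)) := by
            have he4 : m ^ ((1 - p) * (1/p)) * (K ^ (1 - 1/p) * m ^ (1 - 1/p))
                = m ^ ((1 - p) * (1/p)) * m ^ (1 - 1/p) * K ^ (1 - 1/p) := by ring
            have he5 : (1 - p) * (1/p) + (1 - 1/p) = 0 := by
              field_simp
              ring
            rw [← Real.rpow_mul hm.le, Real.mul_rpow hK.le hm.le, he4,
              ← Real.rpow_add hm, he5, Real.rpow_zero, one_mul, hKfact]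
    · -- RHinf part
      calc cubeSup x r (fun y => w y ^ (1 - p)) ≤ m ^ (1 - p) := hsup
        _ ≤ K ^ (p - 1) * (V⁻¹ * I') := hRHfin
        _ = C ^ (p - 1) * (1 + r / ρ x) ^ (θ * (p - 1)) * (V⁻¹ * I') := by
            rw [hKfact]
  exact ⟨fun x r hr => (main x r hr).1, fun x r hr => (main x r hr).2⟩

end AuxLemmas

/-- If `w ∈ A₁^ρ` and `1 < p < ∞`, then `w^{1−p} ∈ A_p^ρ ∩ RH_∞^ρ`;
quantitatively, `w ∈ A₁^{ρ,θ}` implies `w^{1−p} ∈ RH_∞^{ρ,θ/(p'−1)}` with `p' = p/(p−1)`. -/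
theorem A1_neg_power_in_Ap_RHinf {d : ℕ} (ρ : EuclideanSpace ℝ (Fin d) → ℝ)
    (C₀ N₀ : ℝ) (hC₀ : 0 < C₀) (hN₀ : 1 ≤ N₀) (hρ : IsCRF ρ C₀ N₀)
    (w : EuclideanSpace ℝ (Fin d) → ℝ) (hw : IsWeight w) (h : A1 ρ w)
    (p : ℝ) (hp : 1 < p) :
    (Ap ρ p (fun x => w x ^ (1 - p)) ∧ RHinf ρ (fun x => w x ^ (1 - p))) ∧
    (∀ θ, 0 ≤ θ → memA1 ρ θ w →
      memRHinf ρ (θ / (p / (p - 1) - 1)) (fun x => w x ^ (1 - p))) := by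
  have hkey := fun θ C (hC : 0 < C) (hA : A1C ρ θ C w) =>
    key_lemma ρ hρ.1 w hw p hp θ C hC hA
  have hp1 : (0:ℝ) < p - 1 := by linarith
  have hop : 0 ≤ 1 - 1/p := by
    have hp0 : (0:ℝ) < p := by linarith
    have : 1/p < 1 := by rw [div_lt_one hp0]; exact hp
    linarith
  obtain ⟨θ, hθ, C, hC, hA⟩ := h
  refine ⟨⟨⟨θ * (1 - 1/p), mul_nonneg hθ hop,
      C ^ (1 - 1/p), Real.rpow_pos_of_pos hC _, (hkey θ C hC hA).1⟩,
    ⟨θ * (p - 1), mul_nonneg hθ hp1.le,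
      C ^ (p - 1), Real.rpow_pos_of_pos hC _, (hkey θ C hC hA).2⟩⟩, ?_⟩
  intro θ' hθ' hmem
  obtain ⟨C', hC', hA'⟩ := hmem
  have hp1ne : p - 1 ≠ 0 := hp1.ne'
  have heq : θ' / (p / (p - 1) - 1) = θ' * (p - 1) := by
    have h1 : p / (p - 1) - 1 = 1 / (p - 1) := by
      field_simp
      ring
    rw [h1, div_div_eq_mul_div, div_one]
  rw [heq]
  exact ⟨C' ^ (p - 1), Real.rpow_pos_of_pos hC' _, (hkey θ' C' hC' hA').2⟩


end
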